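/- If all three angle conditions r12² + r13² + r12·r13 − r23² > 0, r23² + r12² + r12·r23 − r13² > 0, r13² + r23² + r13·r23 − r12² > 0 hold (equivalently, all angles of the nondegenerate triangle P1P2P3 are less than 2π/3), then the point P* = (x*, y*) with x* = (k1k2k3/(2√3 S d))·(x1/k1 + x2/k2 + x3/k3) and y* = (k1k2k3/(2√3 S d))·(y1/k1 + y2/k2 + y3/k3) minimizes G(x,y) = Σ_{j=1}^3 √((x−x_j)² + (y−y_j)²) over ℝ², with minimum value G(x*, y*) = √d, where d = (k1 + k2 + k3)/√3 = (r12² + r13² + r23²)/2 + √3·S. -/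

import Mathlib

/-- Cauchy–Schwarz style bound: if `(a,b)` is a unit vector then
`w·(a,b) ≤ ‖w‖`. -/
lemma sum_dist_aux (w1 w2 a b : ℝ) (h : a^2 + b^2 = 1) :
    w1*a + w2*b ≤ Real.sqrt (w1^2 + w2^2) := by
  have h1 : Real.sqrt (w1^2 + w2^2) ^ 2 = w1^2 + w2^2 :=
    Real.sq_sqrt (by positivity)
  have h2 : 0 ≤ Real.sqrt (w1^2 + w2^2) := Real.sqrt_nonneg _
  nlinarith [sq_nonneg (w1*b - w2*a), sq_nonneg (Real.sqrt (w1^2 + w2^2) - (w1*a + w2*b))]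

/-- Positivity of the `k` coefficients from the angle conditions. -/
lemma kpos_aux (s S rA rB rC : ℝ) (hs0 : 0 < s) (hs2 : s^2 = 3) (hS : 0 < S)
    (hrA : 0 ≤ rA) (hrB : 0 ≤ rB)
    (heron : 4*S^2 = 2*(rA^2*rB^2 + rA^2*rC^2 + rB^2*rC^2)
      - (rA^2)^2 - (rB^2)^2 - (rC^2)^2)
    (hang : 0 < rA^2 + rB^2 + rA*rB - rC^2) :
    0 < s/2*(rA^2 + rB^2 - rC^2) + S := by
  by_cases hM : 0 ≤ rA^2 + rB^2 - rC^2
  · have := mul_nonneg (by linarith : (0:ℝ) ≤ s/2) hM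
    linarith
  · push_neg at hM
    have h1 : 0 < rA*rB + (rA^2 + rB^2 - rC^2) := by nlinarith [hang]
    have h2 : 0 < rA*rB - (rA^2 + rB^2 - rC^2) := by
      nlinarith [mul_nonneg hrA hrB]
    have h3 : 0 < S - s/2*(rA^2 + rB^2 - rC^2) := by
      nlinarith [mul_pos hs0 (show 0 < -(rA^2 + rB^2 - rC^2) by linarith)]
    have h4 : (S + s/2*(rA^2 + rB^2 - rC^2)) * (S - s/2*(rA^2 + rB^2 - rC^2))
        = (rA*rB + (rA^2 + rB^2 - rC^2)) * (rA*rB - (rA^2 + rB^2 - rC^2)) := by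
      linear_combination (-((rA^2 + rB^2 - rC^2)^2)/4)*hs2 + (1/4)*heron
    nlinarith [mul_pos h1 h2, h3, h4]

/-- Core polynomial identities satisfied by the `k` coefficients. -/
lemma fermat_core (s S k1 k2 k3 A B C : ℝ)
    (hs2 : s^2 = 3)
    (hheron : 4*S^2 = 2*(A*B + A*C + B*C) - A^2 - B^2 - C^2)
    (hk1 : k1 = s/2*(A + B - C) + S)
    (hk2 : k2 = s/2*(C + A - B) + S)
    (hk3 : k3 = s/2*(B + C - A) + S) :
    k1*k2 + k1*k3 + k2*k3 = 2*S*(k1 + k2 + k3)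
    ∧ s*(k2^2*B + k3^2*A + k2*k3*(A + B - C)) = 4*S^2*(k1 + k2 + k3)
    ∧ s*(k1^2*C + k3^2*A + k1*k3*(C + A - B)) = 4*S^2*(k1 + k2 + k3)
    ∧ s*(k1^2*C + k2^2*B + k1*k2*(B + C - A)) = 4*S^2*(k1 + k2 + k3) := by
  subst hk1 hk2 hk3
  refine ⟨?_, ?_, ?_, ?_⟩
  · linear_combination (((A+B-C)*(C+A-B)+(A+B-C)*(B+C-A)+(C+A-B)*(B+C-A))/4)*hs2
      - (3/4)*hheron
  · linear_combination (s*((C+A-B)^2*B + (B+C-A)^2*A + (A+B-C)*(C+A-B)*(B+C-A))/4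
      + S*((A+B-C)*C + (C+A-B)*B + (B+C-A)*A))*hs2 - ((3*s*C + 12*S)/4)*hheron
  · linear_combination (s*((A+B-C)^2*C + (B+C-A)^2*A + (A+B-C)*(C+A-B)*(B+C-A))/4
      + S*((A+B-C)*C + (C+A-B)*B + (B+C-A)*A))*hs2 - ((3*s*B + 12*S)/4)*hheron
  · linear_combination (s*((A+B-C)^2*C + (C+A-B)^2*B + (A+B-C)*(C+A-B)*(B+C-A))/4
      + S*((A+B-C)*C + (C+A-B)*B + (B+C-A)*A))*hs2 - ((3*s*A + 12*S)/4)*hheron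

set_option maxHeartbeats 2000000 in
/-- Classical Fermat–Torricelli problem: if all angles of the triangle are less
than `2π/3`, the explicit point `P* = (x*, y*)` minimizes the sum of distances,
with minimum value `√d`. -/
theorem classical_fermat_torricelli
    (x1 y1 x2 y2 x3 y3 : ℝ)
    (hnd : x1*y2 + x2*y3 + x3*y1 - x1*y3 - x3*y2 - x2*y1 ≠ 0)
    (r12 r13 r23 S k1 k2 k3 d : ℝ)
    (hr12 : r12 = Real.sqrt ((x1-x2)^2 + (y1-y2)^2))
    (hr13 : r13 = Real.sqrt ((x1-x3)^2 + (y1-y3)^2))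
    (hr23 : r23 = Real.sqrt ((x2-x3)^2 + (y2-y3)^2))
    (hS : S = |x1*y2 + x2*y3 + x3*y1 - x1*y3 - x3*y2 - x2*y1|)
    (hk1 : k1 = (Real.sqrt 3/2)*(r12^2 + r13^2 - r23^2) + S)
    (hk2 : k2 = (Real.sqrt 3/2)*(r23^2 + r12^2 - r13^2) + S)
    (hk3 : k3 = (Real.sqrt 3/2)*(r13^2 + r23^2 - r12^2) + S)
    (hd : d = (k1 + k2 + k3) / Real.sqrt 3)
    (hang1 : 0 < r12^2 + r13^2 + r12*r13 - r23^2)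
    (hang2 : 0 < r23^2 + r12^2 + r12*r23 - r13^2)
    (hang3 : 0 < r13^2 + r23^2 + r13*r23 - r12^2)
    (G : ℝ → ℝ → ℝ)
    (hG : ∀ x y, G x y =
        Real.sqrt ((x-x1)^2 + (y-y1)^2)
      + Real.sqrt ((x-x2)^2 + (y-y2)^2)
      + Real.sqrt ((x-x3)^2 + (y-y3)^2))
    (xs ys : ℝ)
    (hxs : xs = (k1*k2*k3/(2*Real.sqrt 3*S*d)) * (x1/k1 + x2/k2 + x3/k3))
    (hys : ys = (k1*k2*k3/(2*Real.sqrt 3*S*d)) * (y1/k1 + y2/k2 + y3/k3)) :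
    d = (r12^2 + r13^2 + r23^2)/2 + Real.sqrt 3 * S ∧
    G xs ys = Real.sqrt d ∧
    ∀ x y : ℝ, G xs ys ≤ G x y := by
  set s := Real.sqrt 3 with hs_def
  have hs0 : 0 < s := Real.sqrt_pos.2 (by norm_num)
  have hs2 : s^2 = 3 := Real.sq_sqrt (by norm_num)
  have hSpos : 0 < S := by rw [hS]; exact abs_pos.2 hnd
  have hSsq : S^2 = (x1*y2 + x2*y3 + x3*y1 - x1*y3 - x3*y2 - x2*y1)^2 := by
    rw [hS]; exact sq_abs _
  have hA : r12^2 = (x1-x2)^2 + (y1-y2)^2 := by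
    rw [hr12]; exact Real.sq_sqrt (by positivity)
  have hB : r13^2 = (x1-x3)^2 + (y1-y3)^2 := by
    rw [hr13]; exact Real.sq_sqrt (by positivity)
  have hC : r23^2 = (x2-x3)^2 + (y2-y3)^2 := by
    rw [hr23]; exact Real.sq_sqrt (by positivity)
  have hr12nn : 0 ≤ r12 := by rw [hr12]; exact Real.sqrt_nonneg _
  have hr13nn : 0 ≤ r13 := by rw [hr13]; exact Real.sqrt_nonneg _
  have hr23nn : 0 ≤ r23 := by rw [hr23]; exact Real.sqrt_nonneg _
  have hheron : 4*S^2 = 2*(r12^2*r13^2 + r12^2*r23^2 + r13^2*r23^2)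
      - (r12^2)^2 - (r13^2)^2 - (r23^2)^2 := by
    rw [hA, hB, hC]; linear_combination 4*hSsq
  have hk1pos : 0 < k1 := by
    rw [hk1]; exact kpos_aux s S r12 r13 r23 hs0 hs2 hSpos hr12nn hr13nn hheron hang1
  have hk2pos : 0 < k2 := by
    rw [hk2]
    exact kpos_aux s S r23 r12 r13 hs0 hs2 hSpos hr23nn hr12nn
      (by linear_combination hheron) (by rw [mul_comm r23 r12]; exact hang2)
  have hk3pos : 0 < k3 := by
    rw [hk3]
    exact kpos_aux s S r13 r23 r12 hs0 hs2 hSpos hr13nn hr23nn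
      (by linear_combination hheron) hang3
  have hk1ne : k1 ≠ 0 := ne_of_gt hk1pos
  have hk2ne : k2 ≠ 0 := ne_of_gt hk2pos
  have hk3ne : k3 ≠ 0 := ne_of_gt hk3pos
  have hsne : s ≠ 0 := ne_of_gt hs0
  have hSne : S ≠ 0 := ne_of_gt hSpos
  have hsd : s * d = k1 + k2 + k3 := by
    rw [hd]; field_simp
  have hdpos : 0 < d := by
    have h0 : 0 < s * d := by rw [hsd]; linarith
    have h1 := div_pos h0 hs0
    rwa [mul_div_cancel_left₀ d (ne_of_gt hs0)] at h1
  have hdne : d ≠ 0 := ne_of_gt hdpos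
  obtain ⟨hIII, hIV1s, hIV2s, hIV3s⟩ :=
    fermat_core s S k1 k2 k3 (r12^2) (r13^2) (r23^2) hs2 hheron
      (by rw [hk1]) (by rw [hk2]) (by rw [hk3])
  -- first conjunct
  have h3d : 3*d = s*(k1 + k2 + k3) := by linear_combination -d*hs2 + s*hsd
  rw [hk1, hk2, hk3] at h3d
  have hcon1 : d = (r12^2 + r13^2 + r23^2)/2 + s * S := by
    linear_combination (1/3)*h3d + ((r12^2 + r13^2 + r23^2)/6)*hs2
  -- barycentric identities
  have h2sSd : 2*s*S*d = k1*k2 + k1*k3 + k2*k3 := by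
    linear_combination 2*S*hsd - hIII
  have hXs : (2*s*S*d) * xs = x1*(k2*k3) + x2*(k1*k3) + x3*(k1*k2) := by
    rw [hxs]; field_simp
  have hYs : (2*s*S*d) * ys = y1*(k2*k3) + y2*(k1*k3) + y3*(k1*k2) := by
    rw [hys]; field_simp
  have hIIx : (x1-xs)*(k2*k3) + (x2-xs)*(k1*k3) + (x3-xs)*(k1*k2) = 0 := by
    linear_combination xs*h2sSd - hXs
  have hIIy : (y1-ys)*(k2*k3) + (y2-ys)*(k1*k3) + (y3-ys)*(k1*k2) = 0 := by
    linear_combination ys*h2sSd - hYs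
  have hv1x : (2*s*S*d)*(x1 - xs) = k1*(k2*(x1-x3) + k3*(x1-x2)) := by
    linear_combination x1*h2sSd - hXs
  have hv1y : (2*s*S*d)*(y1 - ys) = k1*(k2*(y1-y3) + k3*(y1-y2)) := by
    linear_combination y1*h2sSd - hYs
  have hv2x : (2*s*S*d)*(x2 - xs) = k2*(k1*(x2-x3) + k3*(x2-x1)) := by
    linear_combination x2*h2sSd - hXs
  have hv2y : (2*s*S*d)*(y2 - ys) = k2*(k1*(y2-y3) + k3*(y2-y1)) := by
    linear_combination y2*h2sSd - hYs
  have hv3x : (2*s*S*d)*(x3 - xs) = k3*(k1*(x3-x2) + k2*(x3-x1)) := by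
    linear_combination x3*h2sSd - hXs
  have hv3y : (2*s*S*d)*(y3 - ys) = k3*(k1*(y3-y2) + k2*(y3-y1)) := by
    linear_combination y3*h2sSd - hYs
  -- the squared-distance identities
  have hIV1 : (k2*(x1-x3) + k3*(x1-x2))^2 + (k2*(y1-y3) + k3*(y1-y2))^2
      = 4*S^2*d := by
    refine mul_left_cancel₀ hsne ?_
    linear_combination hIV1s - 4*S^2*hsd - s*(k3^2 + k2*k3)*hA
      - s*(k2^2 + k2*k3)*hB + s*(k2*k3)*hC
  have hIV2 : (k1*(x2-x3) + k3*(x2-x1))^2 + (k1*(y2-y3) + k3*(y2-y1))^2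
      = 4*S^2*d := by
    refine mul_left_cancel₀ hsne ?_
    linear_combination hIV2s - 4*S^2*hsd - s*(k3^2 + k1*k3)*hA
      + s*(k1*k3)*hB - s*(k1^2 + k1*k3)*hC
  have hIV3 : (k1*(x3-x2) + k2*(x3-x1))^2 + (k1*(y3-y2) + k2*(y3-y1))^2
      = 4*S^2*d := by
    refine mul_left_cancel₀ hsne ?_
    linear_combination hIV3s - 4*S^2*hsd + s*(k1*k2)*hA
      - s*(k2^2 + k1*k2)*hB - s*(k1^2 + k1*k2)*hC
  have h4S2dne : (4*S^2*d : ℝ) ≠ 0 :=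
    ne_of_gt (mul_pos (mul_pos (by norm_num) (pow_pos hSpos 2)) hdpos)
  have e1 : (2*s*S*d)^2 * ((xs-x1)^2 + (ys-y1)^2) = k1^2*(4*S^2*d) := by
    linear_combination (2*s*S*d*(x1-xs) + k1*(k2*(x1-x3) + k3*(x1-x2)))*hv1x
      + (2*s*S*d*(y1-ys) + k1*(k2*(y1-y3) + k3*(y1-y2)))*hv1y + k1^2*hIV1
  have e2 : (2*s*S*d)^2 * ((xs-x2)^2 + (ys-y2)^2) = k2^2*(4*S^2*d) := by
    linear_combination (2*s*S*d*(x2-xs) + k2*(k1*(x2-x3) + k3*(x2-x1)))*hv2x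
      + (2*s*S*d*(y2-ys) + k2*(k1*(y2-y3) + k3*(y2-y1)))*hv2y + k2^2*hIV2
  have e3 : (2*s*S*d)^2 * ((xs-x3)^2 + (ys-y3)^2) = k3^2*(4*S^2*d) := by
    linear_combination (2*s*S*d*(x3-xs) + k3*(k1*(x3-x2) + k2*(x3-x1)))*hv3x
      + (2*s*S*d*(y3-ys) + k3*(k1*(y3-y2) + k2*(y3-y1)))*hv3y + k3^2*hIV3
  have keyM1 : 3*d*((xs-x1)^2 + (ys-y1)^2) = k1^2 := by
    refine mul_left_cancel₀ h4S2dne ?_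
    linear_combination e1 - 4*S^2*d^2*((xs-x1)^2 + (ys-y1)^2)*hs2
  have keyM2 : 3*d*((xs-x2)^2 + (ys-y2)^2) = k2^2 := by
    refine mul_left_cancel₀ h4S2dne ?_
    linear_combination e2 - 4*S^2*d^2*((xs-x2)^2 + (ys-y2)^2)*hs2
  have keyM3 : 3*d*((xs-x3)^2 + (ys-y3)^2) = k3^2 := by
    refine mul_left_cancel₀ h4S2dne ?_
    linear_combination e3 - 4*S^2*d^2*((xs-x3)^2 + (ys-y3)^2)*hs2
  -- set up t = √(3d)
  have hsqd : Real.sqrt d * Real.sqrt d = d := Real.mul_self_sqrt hdpos.le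
  set t := s * Real.sqrt d with ht_def
  have ht0 : 0 < t := mul_pos hs0 (Real.sqrt_pos.2 hdpos)
  have htne : t ≠ 0 := ne_of_gt ht0
  have ht2 : t^2 = 3*d := by
    rw [ht_def]; linear_combination Real.sqrt d * Real.sqrt d * hs2 + 3*hsqd
  have hts : t*s = 3*Real.sqrt d := by
    rw [ht_def]; linear_combination Real.sqrt d * hs2
  -- distances from the Fermat point
  have dist1 : Real.sqrt ((xs-x1)^2 + (ys-y1)^2) = k1/t := by
    rw [show (xs-x1)^2 + (ys-y1)^2 = (k1/t)^2 by
      rw [div_pow, eq_div_iff (pow_ne_zero 2 htne)]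
      linear_combination ((xs-x1)^2 + (ys-y1)^2)*ht2 + keyM1]
    exact Real.sqrt_sq (div_nonneg hk1pos.le ht0.le)
  have dist2 : Real.sqrt ((xs-x2)^2 + (ys-y2)^2) = k2/t := by
    rw [show (xs-x2)^2 + (ys-y2)^2 = (k2/t)^2 by
      rw [div_pow, eq_div_iff (pow_ne_zero 2 htne)]
      linear_combination ((xs-x2)^2 + (ys-y2)^2)*ht2 + keyM2]
    exact Real.sqrt_sq (div_nonneg hk2pos.le ht0.le)
  have dist3 : Real.sqrt ((xs-x3)^2 + (ys-y3)^2) = k3/t := by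
    rw [show (xs-x3)^2 + (ys-y3)^2 = (k3/t)^2 by
      rw [div_pow, eq_div_iff (pow_ne_zero 2 htne)]
      linear_combination ((xs-x3)^2 + (ys-y3)^2)*ht2 + keyM3]
    exact Real.sqrt_sq (div_nonneg hk3pos.le ht0.le)
  have hGval : G xs ys = Real.sqrt d := by
    rw [hG xs ys, dist1, dist2, dist3, ← add_div, ← add_div,
      div_eq_iff htne]
    linear_combination -Real.sqrt d * ht_def - hsd - s*hsqd
  refine ⟨hcon1, hGval, ?_⟩
  -- minimality
  intro x y
  rw [hGval, hG x y]
  set α1 := t/k1 with hα1_def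
  set α2 := t/k2 with hα2_def
  set α3 := t/k3 with hα3_def
  have hab1 : (α1*(x1-xs))^2 + (α1*(y1-ys))^2 = 1 := by
    rw [hα1_def]; field_simp
    linear_combination ((x1-xs)^2 + (y1-ys)^2)*ht2 + keyM1
  have hab2 : (α2*(x2-xs))^2 + (α2*(y2-ys))^2 = 1 := by
    rw [hα2_def]; field_simp
    linear_combination ((x2-xs)^2 + (y2-ys)^2)*ht2 + keyM2
  have hab3 : (α3*(x3-xs))^2 + (α3*(y3-ys))^2 = 1 := by
    rw [hα3_def]; field_simp
    linear_combination ((x3-xs)^2 + (y3-ys)^2)*ht2 + keyM3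
  have b1 : (x1-x)*(α1*(x1-xs)) + (y1-y)*(α1*(y1-ys))
      ≤ Real.sqrt ((x-x1)^2 + (y-y1)^2) := by
    rw [show (x-x1)^2 + (y-y1)^2 = (x1-x)^2 + (y1-y)^2 by ring]
    exact sum_dist_aux _ _ _ _ hab1
  have b2 : (x2-x)*(α2*(x2-xs)) + (y2-y)*(α2*(y2-ys))
      ≤ Real.sqrt ((x-x2)^2 + (y-y2)^2) := by
    rw [show (x-x2)^2 + (y-y2)^2 = (x2-x)^2 + (y2-y)^2 by ring]
    exact sum_dist_aux _ _ _ _ hab2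
  have b3 : (x3-x)*(α3*(x3-xs)) + (y3-y)*(α3*(y3-ys))
      ≤ Real.sqrt ((x-x3)^2 + (y-y3)^2) := by
    rw [show (x-x3)^2 + (y-y3)^2 = (x3-x)^2 + (y3-y)^2 by ring]
    exact sum_dist_aux _ _ _ _ hab3
  have hz_x : α1*(x1-xs) + α2*(x2-xs) + α3*(x3-xs) = 0 := by
    rw [hα1_def, hα2_def, hα3_def]; field_simp
    linear_combination t*hIIx
  have hz_y : α1*(y1-ys) + α2*(y2-ys) + α3*(y3-ys) = 0 := by
    rw [hα1_def, hα2_def, hα3_def]; field_simp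
    linear_combination t*hIIy
  have eα1 : α1*((x1-xs)^2 + (y1-ys)^2) = t*k1/(3*d) := by
    rw [hα1_def, div_mul_eq_mul_div, div_eq_div_iff hk1ne (by positivity)]; linear_combination t*keyM1
  have eα2 : α2*((x2-xs)^2 + (y2-ys)^2) = t*k2/(3*d) := by
    rw [hα2_def, div_mul_eq_mul_div, div_eq_div_iff hk2ne (by positivity)]; linear_combination t*keyM2
  have eα3 : α3*((x3-xs)^2 + (y3-ys)^2) = t*k3/(3*d) := by
    rw [hα3_def, div_mul_eq_mul_div, div_eq_div_iff hk3ne (by positivity)]; linear_combination t*keyM3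
  have hz_q : α1*((x1-xs)^2 + (y1-ys)^2) + α2*((x2-xs)^2 + (y2-ys)^2)
      + α3*((x3-xs)^2 + (y3-ys)^2) = Real.sqrt d := by
    rw [eα1, eα2, eα3, ← add_div, ← add_div,
      div_eq_iff (show (3*d:ℝ) ≠ 0 by positivity)]
    linear_combination -t*hsd + d*hts
  have hQ : ((x1-x)*(α1*(x1-xs)) + (y1-y)*(α1*(y1-ys)))
      + ((x2-x)*(α2*(x2-xs)) + (y2-y)*(α2*(y2-ys)))
      + ((x3-x)*(α3*(x3-xs)) + (y3-y)*(α3*(y3-ys))) = Real.sqrt d := by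
    linear_combination hz_q + (xs-x)*hz_x + (ys-y)*hz_y
  calc Real.sqrt d
      = ((x1-x)*(α1*(x1-xs)) + (y1-y)*(α1*(y1-ys)))
      + ((x2-x)*(α2*(x2-xs)) + (y2-y)*(α2*(y2-ys)))
      + ((x3-x)*(α3*(x3-xs)) + (y3-y)*(α3*(y3-ys))) := hQ.symm
    _ ≤ _ := add_le_add (add_le_add b1 b2) b3
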